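/- Let E and F be nonempty closed convex sets in ℝⁿ such that E + F = ℝⁿ and for every u ∈ ℝⁿ the metric projections p_E(u) and p_F(u) are orthogonal, i.e., p_E(u) · p_F(u) = 0. If the origin belongs to the relative interior of E or to the relative interior of F, then E and F are complementary orthogonal linear subspaces of ℝⁿ: E = F^⊥ and F = E^⊥. -/

import Mathlib

open RealInnerProductSpace Pointwise

/-- The (negative) polar set of `X`. -/
def polarSet {n : ℕ} (X : Set (EuclideanSpace ℝ (Fin n))) : Set (EuclideanSpace ℝ (Fin n)) :=
  {x | ∀ e ∈ X, ⟪x, e⟫ ≤ 0}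

/-- The orthogonal complement of a set `X`. -/
def orthComp {n : ℕ} (X : Set (EuclideanSpace ℝ (Fin n))) : Set (EuclideanSpace ℝ (Fin n)) :=
  {x | ∀ u ∈ X, ⟪x, u⟫ = 0}

/-- `y` is the metric projection of `u` on `E`: it belongs to `E` and is nearest to `u`. -/
def IsMetricProj {n : ℕ} (E : Set (EuclideanSpace ℝ (Fin n)))
    (u y : EuclideanSpace ℝ (Fin n)) : Prop :=
  y ∈ E ∧ ∀ x ∈ E, ‖u - y‖ ≤ ‖u - x‖

lemma exists_metricProj {n : ℕ} (E : Set (EuclideanSpace ℝ (Fin n)))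
    (hEne : E.Nonempty) (hEcl : IsClosed E) (hEconv : Convex ℝ E)
    (u : EuclideanSpace ℝ (Fin n)) : ∃ y, IsMetricProj E u y := by
  haveI : Nonempty E := hEne.to_subtype
  obtain ⟨v, hv, hmin⟩ := exists_norm_eq_iInf_of_complete_convex ‹_›
    hEcl.isComplete hEconv u
  refine ⟨v, hv, fun x hx => ?_⟩
  rw [hmin]
  exact ciInf_le ⟨0, fun _ ⟨_, h⟩ => h ▸ norm_nonneg _⟩ (⟨x, hx⟩ : E)

lemma metricProj_inner_le {n : ℕ} {E : Set (EuclideanSpace ℝ (Fin n))}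
    (hEconv : Convex ℝ E) {u y : EuclideanSpace ℝ (Fin n)}
    (h : IsMetricProj E u y) : ∀ x ∈ E, ⟪u - y, x - y⟫ ≤ 0 := by
  haveI : Nonempty E := ⟨⟨y, h.1⟩⟩
  have heq : ‖u - y‖ = ⨅ w : E, ‖u - w‖ := by
    refine le_antisymm (le_ciInf fun w => h.2 w w.2)
      (ciInf_le ⟨0, fun _ ⟨_, h⟩ => h ▸ norm_nonneg _⟩ (⟨y, h.1⟩ : E))
  exact (norm_eq_iInf_iff_real_inner_le_zero hEconv h.1).1 heq

lemma neg_smul_mem_of_relint {n : ℕ} {E : Set (EuclideanSpace ℝ (Fin n))}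
    (h0 : (0 : EuclideanSpace ℝ (Fin n)) ∈ intrinsicInterior ℝ E)
    {e : EuclideanSpace ℝ (Fin n)} (he : e ∈ E) :
    ∃ t : ℝ, 0 < t ∧ -(t • e) ∈ E := by
  obtain ⟨y, hy, hy0⟩ := mem_intrinsicInterior.1 h0
  obtain ⟨ε, hε, hball⟩ := Metric.mem_nhds_iff.1 (mem_interior_iff_mem_nhds.1 hy)
  set t : ℝ := ε / (2 * (‖e‖ + 1)) with ht
  have hepos : (0:ℝ) < ‖e‖ + 1 := by positivity
  have htpos : 0 < t := by positivity
  have hmem : -(t • e) ∈ affineSpan ℝ E := by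
    have h0span : (0 : EuclideanSpace ℝ (Fin n)) ∈ affineSpan ℝ E := by
      rw [← hy0]; exact y.2
    have hespan : e ∈ affineSpan ℝ E := subset_affineSpan ℝ E he
    have := AffineSubspace.smul_vsub_vadd_mem (affineSpan ℝ E) (-t) hespan h0span h0span
    simpa using this
  refine ⟨t, htpos, ?_⟩
  have : (⟨-(t • e), hmem⟩ : affineSpan ℝ E) ∈ Metric.ball y ε := by
    rw [Metric.mem_ball, Subtype.dist_eq]
    simp only [hy0]
    rw [dist_eq_norm, sub_zero, norm_neg, norm_smul]
    rw [Real.norm_eq_abs, abs_of_pos htpos, ht]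
    calc ε / (2 * (‖e‖ + 1)) * ‖e‖ ≤ ε / (2 * (‖e‖ + 1)) * (‖e‖ + 1) := by
          apply mul_le_mul_of_nonneg_left (by linarith) (le_of_lt htpos)
      _ = ε / 2 := by field_simp
      _ < ε := by linarith
  exact hball this

lemma perp_of_relint {n : ℕ} (E F : Set (EuclideanSpace ℝ (Fin n)))
    (hEne : E.Nonempty) (hEcl : IsClosed E) (hEconv : Convex ℝ E)
    (h0 : (0 : EuclideanSpace ℝ (Fin n)) ∈ intrinsicInterior ℝ E)
    (hF : ∀ f ∈ F, ∀ y, IsMetricProj E f y → ⟪y, f⟫ = 0) :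
    ∀ e ∈ E, ∀ f ∈ F, ⟪e, f⟫ = 0 := by
  have h0E : (0 : EuclideanSpace ℝ (Fin n)) ∈ E := intrinsicInterior_subset h0
  have key : ∀ f ∈ F, ∀ x ∈ E, ⟪f, x⟫ ≤ 0 := by
    intro f hf
    obtain ⟨y, hy⟩ := exists_metricProj E hEne hEcl hEconv f
    have horth : ⟪y, f⟫ = 0 := hF f hf y hy
    have hvar := metricProj_inner_le hEconv hy
    have hy0 : y = 0 := by
      have h1 := hvar 0 h0E
      rw [zero_sub, inner_sub_left, inner_neg_right, inner_neg_right] at h1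
      have : ‖y‖ ^ 2 ≤ ⟪f, y⟫ := by
        have := real_inner_self_eq_norm_sq y
        nlinarith [h1]
      rw [real_inner_comm, horth] at this
      have : ‖y‖ = 0 := by nlinarith [norm_nonneg y, sq_nonneg ‖y‖]
      simpa using this
    intro x hx
    have := hvar x hx
    rw [hy0, sub_zero, sub_zero] at this
    exact this
  intro e he f hf
  have h1 : ⟪f, e⟫ ≤ 0 := key f hf e he
  obtain ⟨t, htpos, hmem⟩ := neg_smul_mem_of_relint h0 he
  have h2 := key f hf _ hmem
  rw [inner_neg_right, real_inner_smul_right] at h2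
  have h3 : 0 ≤ ⟪f, e⟫ := by nlinarith
  rw [real_inner_comm]
  linarith

theorem complementary_subspaces_of_origin_in_relint
(n : ℕ) (E F : Set (EuclideanSpace ℝ (Fin n)))
    (hEne : E.Nonempty) (hEcl : IsClosed E) (hEconv : Convex ℝ E)
    (hFne : F.Nonempty) (hFcl : IsClosed F) (hFconv : Convex ℝ F)
    (hsum : E + F = Set.univ)
    (horth : ∀ u y z : EuclideanSpace ℝ (Fin n),
      IsMetricProj E u y → IsMetricProj F u z → ⟪y, z⟫ = 0)
    (hri : (0 : EuclideanSpace ℝ (Fin n)) ∈ intrinsicInterior ℝ E ∨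
      (0 : EuclideanSpace ℝ (Fin n)) ∈ intrinsicInterior ℝ F) :
    E = orthComp F ∧ F = orthComp E := by
  have hdec : ∀ x : EuclideanSpace ℝ (Fin n), ∃ e ∈ E, ∃ f ∈ F, e + f = x := by
    intro x
    have : x ∈ E + F := by rw [hsum]; exact Set.mem_univ x
    exact Set.mem_add.1 this
  have hperp : ∀ e ∈ E, ∀ f ∈ F, ⟪e, f⟫ = 0 := by
    rcases hri with h0 | h0
    · exact perp_of_relint E F hEne hEcl hEconv h0
        (fun f hf y hy => horth f y f hy ⟨hf, fun x hx => by simp⟩)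
    · intro e he f hf
      rw [real_inner_comm]
      exact perp_of_relint F E hFne hFcl hFconv h0
        (fun e' he' z hz => by
          rw [real_inner_comm]
          exact horth e' e' z ⟨he', fun x hx => by simp⟩ hz) f hf e he
  constructor
  · ext x
    constructor
    · intro hx u hu
      exact hperp x hx u hu
    · intro hx
      obtain ⟨e, he, f, hf, rfl⟩ := hdec x
      have h1 : ⟪e + f, f⟫ = 0 := hx f hf
      have h2 : ⟪e, f⟫ = 0 := hperp e he f hf
      have hf0 : f = 0 := by
        rw [inner_add_left, h2, zero_add] at h1
        exact inner_self_eq_zero.1 h1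
      rw [hf0, add_zero]
      exact he
  · ext x
    constructor
    · intro hx u hu
      rw [real_inner_comm]
      exact hperp u hu x hx
    · intro hx
      obtain ⟨e, he, f, hf, rfl⟩ := hdec x
      have h1 : ⟪e + f, e⟫ = 0 := hx e he
      have h2 : ⟪f, e⟫ = 0 := by rw [real_inner_comm]; exact hperp e he f hf
      have he0 : e = 0 := by
        rw [inner_add_left, h2, add_zero] at h1
        exact inner_self_eq_zero.1 h1
      rw [he0, zero_add]
      exact hf
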